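/- Let n ≥ 1, ε > 0, p > 0 and u ∈ ℝⁿ with F_ε(u) ≤ pε. Then uᵢ ≥ −(1 + √p)·ε for every i = 1,…,n, and ∑ᵢ uᵢ ≤ 1 + (1 + √p)·ε. -/
import Mathlib


noncomputable def fe (ε z : ℝ) : ℝ := if z ≤ ε then 0 else ε⁻¹ * (z - ε) ^ 2

noncomputable def Fe (n : ℕ) (ε : ℝ) (u : EuclideanSpace ℝ (Fin n)) : ℝ :=
  fe ε (∑ i, u i - 1) + ∑ i, fe ε (-(u i))

lemma fe_nonneg {ε : ℝ} (hε : 0 < ε) (z : ℝ) : 0 ≤ fe ε z := by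
  unfold fe
  split
  · exact le_refl 0
  · positivity

lemma fe_bound {ε p : ℝ} (hε : 0 < ε) (hp : 0 < p) {z : ℝ}
    (h : fe ε z ≤ p * ε) : z ≤ (1 + Real.sqrt p) * ε := by
  unfold fe at h
  split_ifs at h with hz
  · nlinarith [Real.sqrt_nonneg p]
  · push_neg at hz
    have h2 : (z - ε) ^ 2 ≤ p * ε ^ 2 := by
      have := mul_le_mul_of_nonneg_left h hε.le
      rw [← mul_assoc, mul_inv_cancel₀ hε.ne', one_mul] at this
      nlinarith
    have h3 : z - ε ≤ Real.sqrt p * ε := by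
      have : (Real.sqrt p * ε) ^ 2 = p * ε ^ 2 := by
        rw [mul_pow, Real.sq_sqrt hp.le]
      nlinarith [Real.sqrt_nonneg p, sq_nonneg (z - ε - Real.sqrt p * ε),
        sq_nonneg (z - ε + Real.sqrt p * ε), mul_pos (Real.sqrt_pos.mpr hp) hε]
    linarith

theorem stmt_11 (n : ℕ) (hn : 1 ≤ n) (ε p : ℝ) (hε : 0 < ε) (hp : 0 < p)
    (u : EuclideanSpace ℝ (Fin n)) (h : Fe n ε u ≤ p * ε) :
    (∀ i, -((1 + Real.sqrt p) * ε) ≤ u i) ∧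
      ∑ i, u i ≤ 1 + (1 + Real.sqrt p) * ε := by
  unfold Fe at h
  have hsum : 0 ≤ ∑ i, fe ε (-(u i)) :=
    Finset.sum_nonneg fun i _ => fe_nonneg hε _
  constructor
  · intro i
    have hle : fe ε (-(u i)) ≤ ∑ j, fe ε (-(u j)) :=
      Finset.single_le_sum (fun j _ => fe_nonneg hε (-(u j))) (Finset.mem_univ i)
    have h1 : fe ε (-(u i)) ≤ p * ε := by
      have := fe_nonneg hε (∑ i, u i - 1)
      linarith
    have := fe_bound hε hp h1
    linarith
  · have h1 : fe ε (∑ i, u i - 1) ≤ p * ε := by linarith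
    have := fe_bound hε hp h1
    linarith
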